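/- Let m ≥ 2 be an integer and F ∈ ℤ[x₁,…,x_n] a homogeneous polynomial of degree k ≥ 2 such that every root of F modulo m^k is congruent to the zero vector modulo m. Let R' ⊆ {0,…,m^k − 1} be a set whose differences between distinct elements are never in F(ℤⁿ) modulo m^k. Then for every positive integer N there exists A ⊆ {1,…,N} with (A − A) ∩ F(ℤⁿ) = {0} and |A| ≥ c(m,k) · N^{(log_m |R'|)/k} for some constant c(m,k) > 0. -/

import Mathlib

open MvPolynomial Finset

/-- value of a digit string in base M (little endian) -/
def digitVal (M : ℕ) : (d : ℕ) → (Fin d → ℕ) → ℕ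
  | 0, _ => 0
  | d + 1, f => f 0 + M * digitVal M d (fun i => f i.succ)

lemma digitVal_lt (M : ℕ) (hM : 0 < M) :
    ∀ d (f : Fin d → ℕ), (∀ i, f i < M) → digitVal M d f < M ^ d := by
  intro d
  induction d with
  | zero => intro f hf; simp [digitVal]
  | succ d ih =>
    intro f hf
    have h1 : digitVal M d (fun i => f i.succ) < M ^ d := ih _ (fun i => hf i.succ)
    have h0 : f 0 < M := hf 0
    calc digitVal M (d+1) f = f 0 + M * digitVal M d (fun i => f i.succ) := rfl
      _ < M + M * digitVal M d (fun i => f i.succ) := by omega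
      _ = M * (digitVal M d (fun i => f i.succ) + 1) := by ring
      _ ≤ M * M ^ d := Nat.mul_le_mul_left M h1
      _ = M ^ (d + 1) := by ring

lemma digitVal_injective (M : ℕ) :
    ∀ d (f g : Fin d → ℕ), (∀ i, f i < M) → (∀ i, g i < M) →
      digitVal M d f = digitVal M d g → f = g := by
  intro d
  induction d with
  | zero => intro f g _ _ _; funext i; exact absurd i.2 (by omega)
  | succ d ih =>
    intro f g hf hg h
    have h' : f 0 + M * digitVal M d (fun i => f i.succ)
        = g 0 + M * digitVal M d (fun i => g i.succ) := h
    have h0 : f 0 = g 0 := by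
      have := congrArg (· % M) h'
      simpa [Nat.add_mul_mod_self_left, Nat.mod_eq_of_lt (hf 0),
        Nat.mod_eq_of_lt (hg 0)] using this
    have hM : 0 < M := lt_of_le_of_lt (Nat.zero_le _) (hf 0)
    have h1 : digitVal M d (fun i => f i.succ) = digitVal M d (fun i => g i.succ) := by
      have : M * digitVal M d (fun i => f i.succ) = M * digitVal M d (fun i => g i.succ) := by
        omega
      exact Nat.eq_of_mul_eq_mul_left hM this
    have htail := ih _ _ (fun i => hf i.succ) (fun i => hg i.succ) h1
    funext i
    rcases Fin.eq_zero_or_eq_succ i with rfl | ⟨j, rfl⟩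
    · exact h0
    · exact congrFun htail j

lemma eval_scale {n k : ℕ} {F : MvPolynomial (Fin n) ℤ} (hF : F.IsHomogeneous k)
    (c : ℤ) (x : Fin n → ℤ) :
    MvPolynomial.eval (fun i => c * x i) F = c ^ k * MvPolynomial.eval x F := by
  rw [MvPolynomial.eval_eq, MvPolynomial.eval_eq, Finset.mul_sum]
  apply Finset.sum_congr rfl
  intro d hd
  have hcoeff : MvPolynomial.coeff d F ≠ 0 := by
    simpa [MvPolynomial.mem_support_iff] using hd
  have hdeg : ∑ i ∈ d.support, d i = k := by
    have := hF hcoeff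
    change Finsupp.weight (fun _ => 1) d = k at this
    rw [← Finsupp.degree_eq_weight_one] at this
    simpa [Finsupp.degree_apply] using this
  rw [show (∏ i ∈ d.support, (c * x i) ^ d i)
      = (∏ i ∈ d.support, c ^ d i) * ∏ i ∈ d.support, x i ^ d i by
    rw [← Finset.prod_mul_distrib]; exact Finset.prod_congr rfl fun i _ => mul_pow _ _ _]
  rw [Finset.prod_pow_eq_pow_sum, hdeg]
  ring

theorem stmt_17 (m k n : ℕ) (hm : 2 ≤ m) (hk : 2 ≤ k)
    (F : MvPolynomial (Fin n) ℤ) (hF : F.IsHomogeneous k)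
    (hroot : ∀ x : Fin n → ℤ,
      ((m : ℤ) ^ k ∣ MvPolynomial.eval x F) → ∀ i, (m : ℤ) ∣ x i)
    (R' : Finset ℕ) (hR' : R' ⊆ Finset.range (m ^ k))
    (hdiff : ∀ r ∈ R', ∀ r' ∈ R', r ≠ r' → ∀ z : Fin n → ℤ,
      ¬ ((r : ℤ) - (r' : ℤ) ≡ MvPolynomial.eval z F [ZMOD (m : ℤ) ^ k])) :
    ∃ c : ℝ, 0 < c ∧ ∀ N : ℕ, 0 < N → ∃ A : Finset ℕ,
      A ⊆ Finset.Icc 1 N ∧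
      (∀ a ∈ A, ∀ a' ∈ A, ∀ z : Fin n → ℤ,
        (a : ℤ) - (a' : ℤ) = MvPolynomial.eval z F → (a : ℤ) - (a' : ℤ) = 0) ∧
      c * (N : ℝ) ^ (Real.logb m R'.card / k) ≤ A.card := by
  set M : ℕ := m ^ k with hM
  have hM2 : 2 ≤ M := le_trans hm (Nat.le_self_pow (by omega) m)
  have hM0 : 0 < M := by omega
  -- key lemma: differences of digit values are not nonzero values of F
  have key : ∀ d (f g : Fin d → ℕ), (∀ i, f i ∈ R') → (∀ i, g i ∈ R') →
      ∀ z : Fin n → ℤ, ((digitVal M d f : ℤ) - (digitVal M d g : ℤ)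
        = MvPolynomial.eval z F) → digitVal M d f = digitVal M d g := by
    intro d
    induction d with
    | zero => intro _ _ _ _ _ _; rfl
    | succ d ih =>
      intro f g hf hg z hz
      have heq : ((f 0 : ℤ) + M * digitVal M d (fun i => f i.succ))
          - ((g 0 : ℤ) + M * digitVal M d (fun i => g i.succ))
          = MvPolynomial.eval z F := by
        have : (digitVal M (d+1) f : ℤ) = (f 0 : ℤ) + M * digitVal M d (fun i => f i.succ) := by
          push_cast [digitVal]; ring
        have h2 : (digitVal M (d+1) g : ℤ) = (g 0 : ℤ) + M * digitVal M d (fun i => g i.succ) := by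
          push_cast [digitVal]; ring
        rw [← this, ← h2]; exact hz
      by_cases h0 : f 0 = g 0
      · -- heads equal; induct on tails
        have hdvd : ((m : ℤ) ^ k) ∣ MvPolynomial.eval z F := by
          refine ⟨(digitVal M d (fun i => f i.succ) : ℤ)
            - (digitVal M d (fun i => g i.succ) : ℤ), ?_⟩
          have : (M : ℤ) = (m : ℤ) ^ k := by push_cast [hM]; ring
          rw [← heq, h0, ← this]; ring
        have hz' : ∀ i, (m : ℤ) ∣ z i := hroot z hdvd
        set w : Fin n → ℤ := fun i => z i / m with hw
        have hzw : z = fun i => (m : ℤ) * w i :=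
          funext fun i => (Int.mul_ediv_cancel' (hz' i)).symm
        have hzeval : MvPolynomial.eval z F = (m : ℤ) ^ k * MvPolynomial.eval w F := by
          rw [hzw, eval_scale hF]
        have hMne : ((m : ℤ) ^ k) ≠ 0 := by positivity
        have htail : (digitVal M d (fun i => f i.succ) : ℤ)
            - (digitVal M d (fun i => g i.succ) : ℤ) = MvPolynomial.eval w F := by
          have hMcast : (M : ℤ) = (m : ℤ) ^ k := by push_cast [hM]; ring
          have := heq
          rw [h0, hzeval, hMcast] at this
          have h3 : (m:ℤ)^k * ((digitVal M d (fun i => f i.succ) : ℤ)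
              - (digitVal M d (fun i => g i.succ) : ℤ))
              = (m:ℤ)^k * MvPolynomial.eval w F := by ring_nf; ring_nf at this; linarith
          exact mul_left_cancel₀ hMne h3
        have := ih _ _ (fun i => hf i.succ) (fun i => hg i.succ) w htail
        show f 0 + M * digitVal M d (fun i => f i.succ)
          = g 0 + M * digitVal M d (fun i => g i.succ)
        rw [h0, this]
      · -- heads different: contradiction with hdiff
        exfalso
        apply hdiff (f 0) (hf 0) (g 0) (hg 0) h0 z
        have hMcast : (M : ℤ) = (m : ℤ) ^ k := by push_cast [hM]; ring
        rw [Int.ModEq]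
        have : MvPolynomial.eval z F - ((f 0 : ℤ) - (g 0 : ℤ))
            = (m:ℤ)^k * ((digitVal M d (fun i => f i.succ) : ℤ)
              - (digitVal M d (fun i => g i.succ) : ℤ)) := by
          rw [← hMcast, ← heq]; ring
        have hdvd : ((m:ℤ)^k) ∣ (MvPolynomial.eval z F - ((f 0 : ℤ) - (g 0 : ℤ))) :=
          ⟨_, this⟩
        exact (Int.modEq_iff_dvd.mpr hdvd)
  -- digits are < M
  have hRlt : ∀ r ∈ R', r < M := fun r hr => Finset.mem_range.mp (hR' hr)
  refine ⟨(M : ℝ)⁻¹, by positivity, ?_⟩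
  intro N hN
  set r : ℕ := R'.card with hr
  by_cases hr1 : r ≤ 1
  · -- trivial case: take A = {1}
    refine ⟨{1}, ?_, ?_, ?_⟩
    · intro a ha; simp only [Finset.mem_singleton] at ha; subst ha
      rw [Finset.mem_Icc]; omega
    · intro a ha a' ha' z hz; simp at ha ha'; simp [ha, ha']
    · have hlog : Real.logb m r = 0 := by
        interval_cases r <;> simp
      rw [hlog, zero_div, Real.rpow_zero, mul_one]
      simp only [Finset.card_singleton, Nat.cast_one]
      rw [inv_le_one_iff₀]
      right; exact_mod_cast by omega
  · push_neg at hr1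
    -- main case
    set d : ℕ := Nat.log M N with hd
    set A : Finset ℕ :=
      (Fintype.piFinset (fun _ : Fin d => R')).image (fun f => digitVal M d f + 1) with hA
    have hmemA : ∀ f ∈ Fintype.piFinset (fun _ : Fin d => R'), ∀ i, f i ∈ R' := by
      intro f hf i; exact (Fintype.mem_piFinset.mp hf) i
    refine ⟨A, ?_, ?_, ?_⟩
    · intro a ha
      rw [hA, Finset.mem_image] at ha
      obtain ⟨f, hf, rfl⟩ := ha
      have hlt : digitVal M d f < M ^ d :=
        digitVal_lt M hM0 d f (fun i => hRlt _ (hmemA f hf i))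
      have : M ^ d ≤ N := Nat.pow_log_le_self M (by omega)
      simp [Finset.mem_Icc]; omega
    · intro a ha a' ha' z hz
      rw [hA, Finset.mem_image] at ha ha'
      obtain ⟨f, hf, rfl⟩ := ha
      obtain ⟨g, hg, rfl⟩ := ha'
      have heq : (digitVal M d f : ℤ) - (digitVal M d g : ℤ) = MvPolynomial.eval z F := by
        push_cast at hz ⊢; linarith
      have := key d f g (hmemA f hf) (hmemA g hg) z heq
      push_cast [this]; ring
    · -- cardinality bound
      have hcard : A.card = r ^ d := by
        rw [hA, Finset.card_image_of_injOn, Fintype.card_piFinset]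
        · simp [hr]
        · intro f hf g hg hfg
          have hfg' : digitVal M d f + 1 = digitVal M d g + 1 := hfg
          have : digitVal M d f = digitVal M d g := by omega
          exact digitVal_injective M d f g (fun i => hRlt _ (hmemA f hf i))
            (fun i => hRlt _ (hmemA g hg i)) this
      rw [hcard]
      have hrM : r ≤ M := by
        have := Finset.card_le_card hR'
        simpa [hr] using this
      -- real estimates
      have hm1 : (1 : ℝ) < m := by exact_mod_cast by omega
      have hr0 : (0 : ℝ) < r := by exact_mod_cast by omega
      have hlogb : Real.logb m r / k = Real.logb M r := by
        rw [Real.logb, Real.logb, hM, Nat.cast_pow, Real.log_pow, div_div, mul_comm]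
      rw [hlogb]
      set α : ℝ := Real.logb M r with hα
      have hM1 : (1 : ℝ) < M := by exact_mod_cast hM2
      have hα0 : 0 ≤ α := Real.logb_nonneg hM1 (by exact_mod_cast hr1.le)
      have hNpow : (N : ℝ) ^ α ≤ (r : ℝ) ^ (d + 1) := by
        have hNlt : (N : ℝ) ≤ (M : ℝ) ^ (d + 1) := by
          exact_mod_cast (Nat.lt_pow_succ_log_self hM2 N).le
        calc (N : ℝ) ^ α ≤ ((M : ℝ) ^ (d + 1)) ^ α := by
              apply Real.rpow_le_rpow (by positivity) hNlt hα0
          _ = ((M : ℝ) ^ α) ^ (d + 1) := by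
              rw [← Real.rpow_natCast ((M:ℝ) ^ α), ← Real.rpow_natCast (M:ℝ),
                ← Real.rpow_mul (by positivity), ← Real.rpow_mul (by positivity), mul_comm]
          _ = (r : ℝ) ^ (d + 1) := by
              rw [hα, Real.rpow_logb (by positivity) (ne_of_gt hM1) hr0]
      calc (M : ℝ)⁻¹ * (N : ℝ) ^ α ≤ (M : ℝ)⁻¹ * (r : ℝ) ^ (d + 1) := by
            apply mul_le_mul_of_nonneg_left hNpow (by positivity)
        _ = (r : ℝ) ^ d * ((r : ℝ) / M) := by rw [pow_succ]; ring
        _ ≤ (r : ℝ) ^ d * 1 := by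
            apply mul_le_mul_of_nonneg_left _ (by positivity)
            rw [div_le_one (by positivity)]
            exact_mod_cast hrM
        _ = ((r ^ d : ℕ) : ℝ) := by push_cast; ring
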